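/- Let N ∈ ℕ, τ > 0, let M ∈ ℝ^{N×N} be diagonal with positive diagonal entries, and let D₊, D₋ ∈ ℝ^{N×N} satisfy M·D₊ + D₋ᵀ·M = 0 and D₊𝟙 = D₋𝟙 = 0, where 𝟙 ∈ ℝ^N is the all-ones vector. Set D = (D₊ + D₋)/2. Suppose u, v, w : ℝ → ℝ^N are differentiable and satisfy, for all t: u′ = −(1/3)·( D(u∘u) + u∘(Du) ) − D₊w, v′ = (1/τ)·(Dv − w), and w′ = (1/τ)·(v − D₋u), where ∘ is the entrywise product. Then both the discrete mass t ↦ 𝟙ᵀ M u(t) and the discrete modified energy t ↦ (1/2)·( u(t)ᵀ M u(t) + τ·v(t)ᵀ M v(t) + τ·w(t)ᵀ M w(t) ) are constant in t. -/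

import Mathlib

open Matrix

section Aux

variable {N : ℕ}

lemma aux_dot_transpose (A : Matrix (Fin N) (Fin N) ℝ) (a b : Fin N → ℝ) :
    a ⬝ᵥ A.mulVec b = Aᵀ.mulVec a ⬝ᵥ b := by
  rw [dotProduct_mulVec, mulVec_transpose]

lemma aux_skew_quad {K : Matrix (Fin N) (Fin N) ℝ} (hK : Kᵀ = -K) (x : Fin N → ℝ) :
    x ⬝ᵥ K.mulVec x = 0 := by
  have h : x ⬝ᵥ K.mulVec x = -(x ⬝ᵥ K.mulVec x) := by
    conv_lhs => rw [aux_dot_transpose, hK]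
    rw [neg_mulVec, neg_dotProduct, dotProduct_comm]
  linarith

lemma aux_diag_mulVec {M : Matrix (Fin N) (Fin N) ℝ} (hM : M.IsDiag)
    (x y : Fin N → ℝ) : M.mulVec (x * y) = x * M.mulVec y := by
  funext i
  simp only [Matrix.mulVec, dotProduct, Pi.mul_apply, Finset.mul_sum]
  refine Finset.sum_congr rfl fun j _ => ?_
  by_cases h : i = j
  · subst h; ring
  · rw [hM h]; ring

lemma aux_one_dot_mul (x y : Fin N → ℝ) :
    (fun _ => (1:ℝ)) ⬝ᵥ (x * y) = x ⬝ᵥ y := by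
  simp [dotProduct]

lemma aux_dot_mul_assoc (x y z : Fin N → ℝ) :
    x ⬝ᵥ (y * z) = (x * y) ⬝ᵥ z := by
  simp only [dotProduct, Pi.mul_apply]
  exact Finset.sum_congr rfl fun j _ => by ring

lemma aux_hasDerivAt_mulVec (A : Matrix (Fin N) (Fin N) ℝ) {u : ℝ → Fin N → ℝ}
    {u' : Fin N → ℝ} {t : ℝ} (h : HasDerivAt u u' t) :
    HasDerivAt (fun s => A.mulVec (u s)) (A.mulVec u') t := by
  rw [hasDerivAt_pi] at h ⊢
  intro i
  simp only [Matrix.mulVec, dotProduct]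
  exact HasDerivAt.fun_sum fun j _ => (h j).const_mul (A i j)

lemma aux_hasDerivAt_dot {x y : ℝ → Fin N → ℝ} {x' y' : Fin N → ℝ} {t : ℝ}
    (hx : HasDerivAt x x' t) (hy : HasDerivAt y y' t) :
    HasDerivAt (fun s => x s ⬝ᵥ y s) (x' ⬝ᵥ y t + x t ⬝ᵥ y') t := by
  rw [hasDerivAt_pi] at hx hy
  have h := HasDerivAt.fun_sum
    (fun i (_ : i ∈ (Finset.univ : Finset (Fin N))) => (hx i).mul (hy i))
  simpa [dotProduct, Finset.sum_add_distrib] using h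

end Aux

theorem kdvh_semidiscretization_invariants (N : ℕ) (τ : ℝ) (hτ : 0 < τ)
    (M Dp Dm : Matrix (Fin N) (Fin N) ℝ)
    (hMdiag : M.IsDiag) (hMpos : ∀ i, 0 < M i i)
    (hSBP : M * Dp + Dm.transpose * M = 0)
    (hDp1 : Dp.mulVec (fun _ => 1) = 0) (hDm1 : Dm.mulVec (fun _ => 1) = 0)
    (D : Matrix (Fin N) (Fin N) ℝ) (hD : D = (1/2 : ℝ) • (Dp + Dm))
    (u v w : ℝ → Fin N → ℝ)
    (hu : Differentiable ℝ u) (hv : Differentiable ℝ v) (hw : Differentiable ℝ w)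
    (hueq : ∀ t : ℝ, deriv u t =
      -(1/3 : ℝ) • (D.mulVec (u t * u t) + u t * D.mulVec (u t)) - Dp.mulVec (w t))
    (hveq : ∀ t : ℝ, deriv v t = (1/τ) • (D.mulVec (v t) - w t))
    (hweq : ∀ t : ℝ, deriv w t = (1/τ) • (v t - Dm.mulVec (u t))) :
    (∀ t₁ t₂ : ℝ,
      (fun _ => (1:ℝ)) ⬝ᵥ M.mulVec (u t₁) = (fun _ => (1:ℝ)) ⬝ᵥ M.mulVec (u t₂)) ∧
    (∀ t₁ t₂ : ℝ,
      (1/2 : ℝ) * (u t₁ ⬝ᵥ M.mulVec (u t₁) + τ * (v t₁ ⬝ᵥ M.mulVec (v t₁))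
        + τ * (w t₁ ⬝ᵥ M.mulVec (w t₁))) =
      (1/2 : ℝ) * (u t₂ ⬝ᵥ M.mulVec (u t₂) + τ * (v t₂ ⬝ᵥ M.mulVec (v t₂))
        + τ * (w t₂ ⬝ᵥ M.mulVec (w t₂)))) := by
  -- symmetry of M
  have hMsym : Mᵀ = M := by
    ext i j
    by_cases h : i = j
    · subst h; simp [Matrix.transpose_apply]
    · rw [Matrix.transpose_apply, hMdiag h, hMdiag (Ne.symm h)]
  -- M * Dp = -(Dmᵀ * M)
  have hMDp : M * Dp = -(Dmᵀ * M) := eq_neg_of_add_eq_zero_left hSBP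
  -- transposed SBP relation
  have hSBPt : Dpᵀ * M + M * Dm = 0 := by
    have h := congrArg Matrix.transpose hSBP
    simpa [Matrix.transpose_add, Matrix.transpose_mul, Matrix.transpose_transpose,
      hMsym] using h
  have hMDm : M * Dm = -(Dpᵀ * M) := eq_neg_of_add_eq_zero_right hSBPt
  have hDpTM : Dpᵀ * M = -(M * Dm) := by rw [hMDm, neg_neg]
  have hDmTM : Dmᵀ * M = -(M * Dp) := by rw [hMDp, neg_neg]
  -- MD is skew-symmetric
  have hskew : (M * D)ᵀ = -(M * D) := by
    rw [hD]
    rw [Matrix.mul_smul, Matrix.transpose_smul, Matrix.mul_add, Matrix.transpose_add,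
      Matrix.transpose_mul, Matrix.transpose_mul, hMsym, hDpTM, hDmTM]
    module
  -- D annihilates ones
  have hD1 : D.mulVec (fun _ => 1) = 0 := by
    rw [hD]
    simp [Matrix.add_mulVec, Matrix.smul_mulVec, hDp1, hDm1]
  -- symmetry of the bilinear form
  have hsymdot : ∀ x y : Fin N → ℝ, x ⬝ᵥ M.mulVec y = y ⬝ᵥ M.mulVec x := by
    intro x y
    rw [aux_dot_transpose, hMsym, dotProduct_comm]
  -- cross relation
  have hcross : ∀ a b : Fin N → ℝ,
      a ⬝ᵥ M.mulVec (Dp.mulVec b) = -(b ⬝ᵥ M.mulVec (Dm.mulVec a)) := by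
    intro a b
    rw [mulVec_mulVec, mulVec_mulVec, aux_dot_transpose, Matrix.transpose_mul, hMsym,
      hDpTM, neg_mulVec, neg_dotProduct, dotProduct_comm]
  -- mass derivative is zero
  have hmass0 : ∀ t : ℝ, (fun _ => (1:ℝ)) ⬝ᵥ M.mulVec (deriv u t) = 0 := by
    intro t
    rw [hueq t]
    set x := u t with hx
    have h1 : (fun _ => (1:ℝ)) ⬝ᵥ M.mulVec (D.mulVec (x * x)) = 0 := by
      rw [mulVec_mulVec, aux_dot_transpose, hskew, neg_mulVec, ← mulVec_mulVec,
        hD1, Matrix.mulVec_zero]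
      simp
    have h2 : (fun _ => (1:ℝ)) ⬝ᵥ M.mulVec (x * D.mulVec x) = 0 := by
      rw [aux_diag_mulVec hMdiag, aux_one_dot_mul, mulVec_mulVec]
      exact aux_skew_quad hskew x
    have h3 : (fun _ => (1:ℝ)) ⬝ᵥ M.mulVec (Dp.mulVec (w t)) = 0 := by
      rw [hcross, hDm1, Matrix.mulVec_zero, dotProduct_zero, neg_zero]
    rw [Matrix.mulVec_sub, dotProduct_sub, Matrix.mulVec_smul, dotProduct_smul,
      Matrix.mulVec_add, dotProduct_add, h1, h2, h3]
    simp
  -- energy derivative is zero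
  have henergy0 : ∀ t : ℝ,
      u t ⬝ᵥ M.mulVec (deriv u t) + τ * (v t ⬝ᵥ M.mulVec (deriv v t))
        + τ * (w t ⬝ᵥ M.mulVec (deriv w t)) = 0 := by
    intro t
    rw [hueq t, hveq t, hweq t]
    have hτ' : τ ≠ 0 := ne_of_gt hτ
    have hcancel : ∀ E : ℝ, τ * (1/τ * E) = E := by
      intro E; field_simp
    set x := u t; set y := v t; set z := w t
    have h1 : x ⬝ᵥ M.mulVec (D.mulVec (x * x)) + x ⬝ᵥ M.mulVec (x * D.mulVec x) = 0 := by
      have e1 : x ⬝ᵥ M.mulVec (x * D.mulVec x) = (x * x) ⬝ᵥ M.mulVec (D.mulVec x) := by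
        rw [aux_diag_mulVec hMdiag, aux_dot_mul_assoc]
      have e2 : x ⬝ᵥ M.mulVec (D.mulVec (x * x)) = -((x*x) ⬝ᵥ M.mulVec (D.mulVec x)) := by
        rw [mulVec_mulVec, mulVec_mulVec, aux_dot_transpose, hskew, neg_mulVec,
          neg_dotProduct, dotProduct_comm]
      rw [e1, e2]; ring
    have h2 : y ⬝ᵥ M.mulVec (D.mulVec y) = 0 := by
      rw [mulVec_mulVec]; exact aux_skew_quad hskew y
    have h3 : x ⬝ᵥ M.mulVec (Dp.mulVec z) = -(z ⬝ᵥ M.mulVec (Dm.mulVec x)) := hcross x z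
    have h4 : y ⬝ᵥ M.mulVec z = z ⬝ᵥ M.mulVec y := hsymdot y z
    rw [Matrix.mulVec_sub, dotProduct_sub, Matrix.mulVec_smul, dotProduct_smul,
      Matrix.mulVec_add, dotProduct_add,
      Matrix.mulVec_smul, dotProduct_smul, Matrix.mulVec_sub, dotProduct_sub,
      Matrix.mulVec_smul, dotProduct_smul, Matrix.mulVec_sub, dotProduct_sub]
    simp only [smul_eq_mul]
    rw [hcancel, hcancel]
    linarith [h1, h2, h3, h4]
  constructor
  · intro t₁ t₂
    have hder : ∀ t : ℝ, HasDerivAt (fun s => (fun _ => (1:ℝ)) ⬝ᵥ M.mulVec (u s))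
        ((0 : Fin N → ℝ) ⬝ᵥ M.mulVec (u t) + (fun _ => (1:ℝ)) ⬝ᵥ M.mulVec (deriv u t)) t := by
      intro t
      exact aux_hasDerivAt_dot (hasDerivAt_const t _)
        (aux_hasDerivAt_mulVec M (hu t).hasDerivAt)
    refine is_const_of_deriv_eq_zero (fun t => (hder t).differentiableAt) (fun t => ?_) t₁ t₂
    rw [(hder t).deriv, hmass0 t]
    simp
  · intro t₁ t₂
    set E : ℝ → ℝ := fun t =>
      (1/2 : ℝ) * (u t ⬝ᵥ M.mulVec (u t) + τ * (v t ⬝ᵥ M.mulVec (v t))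
        + τ * (w t ⬝ᵥ M.mulVec (w t))) with hE
    have hEder : ∀ t, HasDerivAt E
        ((1/2 : ℝ) * ((deriv u t ⬝ᵥ M.mulVec (u t) + u t ⬝ᵥ M.mulVec (deriv u t))
          + τ * (deriv v t ⬝ᵥ M.mulVec (v t) + v t ⬝ᵥ M.mulVec (deriv v t))
          + τ * (deriv w t ⬝ᵥ M.mulVec (w t) + w t ⬝ᵥ M.mulVec (deriv w t)))) t := by
      intro t
      have h1 := aux_hasDerivAt_dot (hu t).hasDerivAt (aux_hasDerivAt_mulVec M (hu t).hasDerivAt)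
      have h2 := aux_hasDerivAt_dot (hv t).hasDerivAt (aux_hasDerivAt_mulVec M (hv t).hasDerivAt)
      have h3 := aux_hasDerivAt_dot (hw t).hasDerivAt (aux_hasDerivAt_mulVec M (hw t).hasDerivAt)
      exact (((h1.add (h2.const_mul τ)).add (h3.const_mul τ)).const_mul (1/2 : ℝ))
    refine is_const_of_deriv_eq_zero (fun t => (hEder t).differentiableAt) (fun t => ?_) t₁ t₂
    rw [(hEder t).deriv]
    have e1 : deriv u t ⬝ᵥ M.mulVec (u t) = u t ⬝ᵥ M.mulVec (deriv u t) := hsymdot _ _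
    have e2 : deriv v t ⬝ᵥ M.mulVec (v t) = v t ⬝ᵥ M.mulVec (deriv v t) := hsymdot _ _
    have e3 : deriv w t ⬝ᵥ M.mulVec (w t) = w t ⬝ᵥ M.mulVec (deriv w t) := hsymdot _ _
    rw [e1, e2, e3]
    have h := henergy0 t
    linarith
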